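/- arXiv:1404.7299 — 3 statements merged into one kernel-verified Lean document; each statement's English description precedes it below -/
import Mathlib

section
/- Let (Ω, ℱ, ℙ) be a probability space. Let g : ℝ×ℝ → ℝ be convex and differentiable with ∂g/∂y(x,y) ≥ 0 for all (x,y), and let χ : ℝ → ℝ be convex and differentiable. Let X, X̂ : Ω → ℝ be random variables and R : Ω → ℝ a random variable with R ≥ 0 almost surely. Write ŷ := E[χ(X̂)] and y := E[χ(X)], and assume that χ(X), χ(X̂), (g(X̂,ŷ) − g(X,y))·R, ∂ₓg(X̂,ŷ)·R·(X̂−X), ∂_y g(X̂,ŷ)·R, and χ′(X̂)·(X̂−X) are all integrable. Then E[(g(X̂,ŷ) − g(X,y))·R] ≤ E[∂ₓg(X̂,ŷ)·R·(X̂−X)] + E[∂_y g(X̂,ŷ)·R] · E[χ′(X̂)·(X̂−X)]. -/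
open MeasureTheory

/-- Tangent line inequality for a convex differentiable function on ℝ. -/
lemma tangent_line_le {f : ℝ → ℝ} (hf : ConvexOn ℝ Set.univ f)
    (hd : Differentiable ℝ f) (b a : ℝ) :
    f b + deriv f b * (a - b) ≤ f a := by
  rcases lt_trichotomy a b with h | h | h
  · have := ConvexOn.slope_le_deriv hf (Set.mem_univ a) (Set.mem_univ b) h (hd b)
    rw [slope_def_field] at this
    have hb : 0 < b - a := by linarith
    rw [div_le_iff₀ hb] at this
    nlinarith
  · simp [h]
  · have := ConvexOn.deriv_le_slope hf (Set.mem_univ b) (Set.mem_univ a) h (hd b)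
    rw [slope_def_field] at this
    have hb : 0 < a - b := by linarith
    rw [le_div_iff₀ hb] at this
    nlinarith

/-- Tangent plane inequality for a convex differentiable function on ℝ × ℝ. -/
lemma tangent_plane_le {g : ℝ × ℝ → ℝ} (hg : ConvexOn ℝ Set.univ g)
    (hd : Differentiable ℝ g) (b a : ℝ × ℝ) :
    g b + fderiv ℝ g b (a - b) ≤ g a := by
  set φ : ℝ → ℝ := fun t => g (b + t • (a - b)) with hφ
  have hline : ∀ t : ℝ, (AffineMap.lineMap b a : ℝ →ᵃ[ℝ] ℝ × ℝ) t = b + t • (a - b) := by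
    intro t; simp [AffineMap.lineMap_apply]; abel
  have hφconv : ConvexOn ℝ Set.univ φ := by
    have h2 := hg.comp_affineMap (AffineMap.lineMap b a : ℝ →ᵃ[ℝ] ℝ × ℝ)
    have heq : (g ∘ (AffineMap.lineMap b a : ℝ →ᵃ[ℝ] ℝ × ℝ)) = φ :=
      funext fun t => by rw [Function.comp_apply, hline]
    rw [heq] at h2
    simpa using h2
  have hγ : ∀ t : ℝ, HasDerivAt (fun s : ℝ => b + s • (a - b)) (a - b) t := by
    intro t
    simpa using ((hasDerivAt_id t).smul_const (a - b)).const_add b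
  have hφd : ∀ t : ℝ, HasDerivAt φ (fderiv ℝ g (b + t • (a - b)) (a - b)) t := by
    intro t
    exact ((hd _).hasFDerivAt.comp_hasDerivAt t (hγ t))
  have key := tangent_line_le hφconv (fun t => (hφd t).differentiableAt) 0 1
  rw [(hφd 0).deriv] at key
  simpa [hφ] using key

/-- The terminal-cost estimate in the proof of the sufficient maximum principle
(Theorem 1): if `g` is convex and differentiable with `∂g/∂y ≥ 0`, `χ` is convex and
differentiable, `R ≥ 0` a.s., and writing `ŷ = E[χ(X̂)]`, `y = E[χ(X)]`, then
`E[(g(X̂,ŷ) - g(X,y)) R] ≤ E[∂ₓg(X̂,ŷ) R (X̂-X)] + E[∂_y g(X̂,ŷ) R] · E[χ'(X̂)(X̂-X)]`. -/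
theorem terminal_cost_convexity_estimate {Ω : Type*} [MeasurableSpace Ω]
    (ℙ : Measure Ω) [IsProbabilityMeasure ℙ]
    (g : ℝ × ℝ → ℝ) (hgconv : ConvexOn ℝ Set.univ g) (hgdiff : Differentiable ℝ g)
    (hgy : ∀ p : ℝ × ℝ, 0 ≤ fderiv ℝ g p (0, 1))
    (χ : ℝ → ℝ) (hχconv : ConvexOn ℝ Set.univ χ) (hχdiff : Differentiable ℝ χ)
    (X Xhat R : Ω → ℝ) (hR : ∀ᵐ ω ∂ℙ, 0 ≤ R ω)
    (hχX : Integrable (fun ω => χ (X ω)) ℙ)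
    (hχXhat : Integrable (fun ω => χ (Xhat ω)) ℙ) :
    let yhat : ℝ := ∫ ω, χ (Xhat ω) ∂ℙ
    let y : ℝ := ∫ ω, χ (X ω) ∂ℙ
    Integrable (fun ω => (g (Xhat ω, yhat) - g (X ω, y)) * R ω) ℙ →
    Integrable (fun ω => fderiv ℝ g (Xhat ω, yhat) (1, 0) * R ω * (Xhat ω - X ω)) ℙ →
    Integrable (fun ω => fderiv ℝ g (Xhat ω, yhat) (0, 1) * R ω) ℙ →
    Integrable (fun ω => deriv χ (Xhat ω) * (Xhat ω - X ω)) ℙ →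
    (∫ ω, (g (Xhat ω, yhat) - g (X ω, y)) * R ω ∂ℙ) ≤
      (∫ ω, fderiv ℝ g (Xhat ω, yhat) (1, 0) * R ω * (Xhat ω - X ω) ∂ℙ) +
      (∫ ω, fderiv ℝ g (Xhat ω, yhat) (0, 1) * R ω ∂ℙ) *
        ∫ ω, deriv χ (Xhat ω) * (Xhat ω - X ω) ∂ℙ := by
  intro yhat y hint1 hint2 hint3 hint4
  set c : ℝ := ∫ ω, deriv χ (Xhat ω) * (Xhat ω - X ω) ∂ℙ with hc_def
  -- yhat - y ≤ c
  have hc : yhat - y ≤ c := by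
    have hmono : (∫ ω, (χ (Xhat ω) - χ (X ω)) ∂ℙ) ≤ c := by
      refine integral_mono (hχXhat.sub hχX) hint4 ?_
      intro ω
      have h := tangent_line_le hχconv hχdiff (Xhat ω) (X ω)
      simp only
      nlinarith [h]
    rwa [integral_sub hχXhat hχX] at hmono
  -- pointwise a.e. inequality
  have hae : ∀ᵐ ω ∂ℙ, (g (Xhat ω, yhat) - g (X ω, y)) * R ω ≤
      fderiv ℝ g (Xhat ω, yhat) (1, 0) * R ω * (Xhat ω - X ω) +
      fderiv ℝ g (Xhat ω, yhat) (0, 1) * R ω * c := by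
    filter_upwards [hR] with ω hRω
    set b : ℝ × ℝ := (Xhat ω, yhat)
    have h := tangent_plane_le hgconv hgdiff b (X ω, y)
    have hdecomp : ((X ω, y) - b : ℝ × ℝ) =
        (X ω - Xhat ω) • ((1 : ℝ), (0 : ℝ)) + (y - yhat) • ((0 : ℝ), (1 : ℝ)) := by
      simp [b, Prod.ext_iff]
    rw [hdecomp, map_add, ContinuousLinearMap.map_smul, ContinuousLinearMap.map_smul] at h
    simp only [smul_eq_mul] at h
    have hgy' := hgy b
    nlinarith [mul_le_mul_of_nonneg_right hc (mul_nonneg hgy' hRω),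
      mul_le_mul_of_nonneg_right h hRω]
  calc (∫ ω, (g (Xhat ω, yhat) - g (X ω, y)) * R ω ∂ℙ)
      ≤ ∫ ω, (fderiv ℝ g (Xhat ω, yhat) (1, 0) * R ω * (Xhat ω - X ω) +
          fderiv ℝ g (Xhat ω, yhat) (0, 1) * R ω * c) ∂ℙ :=
        integral_mono_ae hint1 (hint2.add (hint3.mul_const c)) hae
    _ = _ := by
        rw [integral_add hint2 (hint3.mul_const c), integral_mul_const]
end

section
/- Let (Ω, ℱ, ℙ) be a probability space and k ≥ 1. Let F : Ω × ℝ × ℝᵏ × ℝ → ℝ be jointly measurable such that for every ω ∈ Ω the map (x,y,v) ↦ F(ω,x,y,v) is convex and differentiable on ℝ × ℝᵏ × ℝ, with ∂F/∂yᵢ(ω,x,y,v) ≥ 0 for every i = 1,…,k and all (x,y,v). Let γ₁,…,γ_k : ℝ → ℝ be convex and differentiable. Let X, X̂, U, Û : Ω → ℝ be random variables such that each γᵢ(X) and γᵢ(X̂) is integrable; write ŷ := (E[γ₁(X̂)],…,E[γ_k(X̂)]) and y := (E[γ₁(X)],…,E[γ_k(X)]). Assume that F(·,X̂,ŷ,Û)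 − F(·,X,y,U), ∂ₓF(·,X̂,ŷ,Û)·(X̂−X), ∂_{yᵢ}F(·,X̂,ŷ,Û) for each i, γᵢ′(X̂)·(X̂−X) for each i, and ∂_vF(·,X̂,ŷ,Û)·(Û−U) are all integrable. Then E[F(·,X̂,ŷ,Û) − F(·,X,y,U)] ≤ E[∂ₓF(·,X̂,ŷ,Û)·(X̂−X)] + ∑_{i=1}^{k} E[∂_{yᵢ}F(·,X̂,ŷ,Û)] · E[γᵢ′(X̂)·(X̂−X)] + E[∂_vF(·,X̂,ŷ,Û)·(Û−U)]. -/
open MeasureTheory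

lemma conv1d_grad {f : ℝ → ℝ} (hf : ConvexOn ℝ Set.univ f)
    (hd : ∀ x, DifferentiableAt ℝ f x) (a b : ℝ) :
    f a - f b ≤ deriv f a * (a - b) := by
  rcases lt_trichotomy a b with h | h | h
  · have hs := hf.deriv_le_slope (Set.mem_univ a) (Set.mem_univ b) h (hd a)
    rw [slope_def_field] at hs
    have hba : (0:ℝ) < b - a := by linarith
    have h2 : deriv f a * (b - a) ≤ f b - f a := by
      calc deriv f a * (b - a) ≤ (f b - f a) / (b - a) * (b - a) :=
            mul_le_mul_of_nonneg_right hs hba.le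
        _ = f b - f a := div_mul_cancel₀ _ hba.ne'
    nlinarith
  · simp [h]
  · have hs := hf.slope_le_deriv (Set.mem_univ b) (Set.mem_univ a) h (hd a)
    rw [slope_def_field] at hs
    have hab : (0:ℝ) < a - b := by linarith
    calc f a - f b = (f a - f b) / (a - b) * (a - b) := (div_mul_cancel₀ _ hab.ne').symm
      _ ≤ deriv f a * (a - b) := mul_le_mul_of_nonneg_right hs hab.le

lemma conv_grad {E : Type*} [NormedAddCommGroup E] [NormedSpace ℝ E]
    {f : E → ℝ} (hf : ConvexOn ℝ Set.univ f) (hd : Differentiable ℝ f) (a b : E) :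
    f a - f b ≤ fderiv ℝ f a (a - b) := by
  set g : ℝ → ℝ := fun t => f (a + t • (b - a)) with hg
  have hline : ∀ t : ℝ, HasDerivAt (fun s : ℝ => a + s • (b - a)) (b - a) t := by
    intro t
    simpa using ((hasDerivAt_id t).smul_const (b - a)).const_add a
  have hgd : ∀ t, HasDerivAt g (fderiv ℝ f (a + t • (b - a)) (b - a)) t := fun t =>
    ((hd _).hasFDerivAt.comp_hasDerivAt t (hline t))
  have hgc : ConvexOn ℝ Set.univ g := by
    have := hf.comp_affineMap (AffineMap.lineMap a b)
    have heq : (f ∘ (AffineMap.lineMap a b) : ℝ → ℝ) = g := by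
      funext t
      simp [g, AffineMap.lineMap_apply, add_comm]
    rw [heq] at this
    simpa using this
  have h1 := conv1d_grad hgc (fun x => (hgd x).differentiableAt) 0 1
  have hd0 : deriv g 0 = fderiv ℝ f a (b - a) := by
    have := (hgd 0).deriv
    simpa using this
  have hg0 : g 0 = f a := by simp [g]
  have hg1 : g 1 = f b := by simp [g]
  rw [hg0, hg1, hd0] at h1
  have : fderiv ℝ f a (b - a) * (0 - 1) = fderiv ℝ f a (a - b) := by
    have : fderiv ℝ f a (a - b) = - fderiv ℝ f a (b - a) := by
      rw [← map_neg, neg_sub]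
    rw [this]; ring
  linarith [h1.trans_eq this]

lemma clm_decomp {k : ℕ} (T : (ℝ × (Fin k → ℝ) × ℝ) →L[ℝ] ℝ) (a : ℝ) (b : Fin k → ℝ)
    (d : ℝ) :
    T (a, b, d) = a * T (1, 0, 0) + (∑ i, b i * T (0, Pi.single i 1, 0)) + d * T (0, 0, 1) := by
  have hb : ((a, b, d) : ℝ × (Fin k → ℝ) × ℝ) = a • (((1:ℝ), (0 : Fin k → ℝ), (0:ℝ)) : ℝ × (Fin k → ℝ) × ℝ)
      + (∑ i, b i • ((((0:ℝ), (Pi.single i (1:ℝ) : Fin k → ℝ), (0:ℝ))) : ℝ × (Fin k → ℝ) × ℝ))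
      + d • (((0:ℝ), (0 : Fin k → ℝ), (1:ℝ)) : ℝ × (Fin k → ℝ) × ℝ) := by
    refine Prod.ext ?_ (Prod.ext ?_ ?_)
    · simp [Prod.fst_sum]
    · simp [Prod.snd_sum, Prod.fst_sum, ← Pi.single_smul, Finset.univ_sum_single]
    · simp [Prod.snd_sum]
  rw [hb, map_add, map_add, _root_.map_smul, _root_.map_smul, map_sum]
  have hx : ∀ x : Fin k, (((0:ℝ), b x • (Pi.single x (1:ℝ) : Fin k → ℝ), (0:ℝ)) : ℝ × (Fin k → ℝ) × ℝ)
      = b x • (((0:ℝ), (Pi.single x (1:ℝ) : Fin k → ℝ), (0:ℝ)) : ℝ × (Fin k → ℝ) × ℝ) := by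
    intro x; simp [Prod.smul_mk]
  simp only [hx, _root_.map_smul, smul_eq_mul]

/-- The Hamiltonian convexity estimate in the proof of the sufficient maximum principle
(Theorem 1): if `F(ω,·,·,·)` is convex and differentiable on `ℝ × ℝᵏ × ℝ` with
`∂F/∂yᵢ ≥ 0`, the `γᵢ` are convex and differentiable, and writing
`ŷᵢ = E[γᵢ(X̂)]`, `yᵢ = E[γᵢ(X)]`, then
`E[F(·,X̂,ŷ,Û) - F(·,X,y,U)] ≤ E[∂ₓF(·,X̂,ŷ,Û)(X̂-X)]
  + ∑ᵢ E[∂_{yᵢ}F(·,X̂,ŷ,Û)] E[γᵢ'(X̂)(X̂-X)] + E[∂_vF(·,X̂,ŷ,Û)(Û-U)]`. -/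
theorem hamiltonian_convexity_estimate {Ω : Type*} [MeasurableSpace Ω]
    (ℙ : Measure Ω) [IsProbabilityMeasure ℙ] (k : ℕ) (hk : 1 ≤ k)
    (F : Ω → ℝ × (Fin k → ℝ) × ℝ → ℝ)
    (hFmeas : Measurable (Function.uncurry F))
    (hFconv : ∀ ω : Ω, ConvexOn ℝ Set.univ (F ω))
    (hFdiff : ∀ ω : Ω, Differentiable ℝ (F ω))
    (hFy : ∀ (ω : Ω) (q : ℝ × (Fin k → ℝ) × ℝ) (i : Fin k),
      0 ≤ fderiv ℝ (F ω) q (0, Pi.single i 1, 0))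
    (γ : Fin k → ℝ → ℝ)
    (hγconv : ∀ i, ConvexOn ℝ Set.univ (γ i))
    (hγdiff : ∀ i, Differentiable ℝ (γ i))
    (X Xhat U Uhat : Ω → ℝ)
    (hγX : ∀ i, Integrable (fun ω => γ i (X ω)) ℙ)
    (hγXhat : ∀ i, Integrable (fun ω => γ i (Xhat ω)) ℙ) :
    let yhat : Fin k → ℝ := fun i => ∫ ω, γ i (Xhat ω) ∂ℙ
    let y : Fin k → ℝ := fun i => ∫ ω, γ i (X ω) ∂ℙ
    Integrable (fun ω => F ω (Xhat ω, yhat, Uhat ω) - F ω (X ω, y, U ω)) ℙ →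
    Integrable (fun ω => fderiv ℝ (F ω) (Xhat ω, yhat, Uhat ω) (1, 0, 0) * (Xhat ω - X ω)) ℙ →
    (∀ i : Fin k,
      Integrable (fun ω => fderiv ℝ (F ω) (Xhat ω, yhat, Uhat ω) (0, Pi.single i 1, 0)) ℙ) →
    (∀ i : Fin k, Integrable (fun ω => deriv (γ i) (Xhat ω) * (Xhat ω - X ω)) ℙ) →
    Integrable (fun ω => fderiv ℝ (F ω) (Xhat ω, yhat, Uhat ω) (0, 0, 1) * (Uhat ω - U ω)) ℙ →
    (∫ ω, (F ω (Xhat ω, yhat, Uhat ω) - F ω (X ω, y, U ω)) ∂ℙ) ≤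
      (∫ ω, fderiv ℝ (F ω) (Xhat ω, yhat, Uhat ω) (1, 0, 0) * (Xhat ω - X ω) ∂ℙ) +
      (∑ i : Fin k,
        (∫ ω, fderiv ℝ (F ω) (Xhat ω, yhat, Uhat ω) (0, Pi.single i 1, 0) ∂ℙ) *
          ∫ ω, deriv (γ i) (Xhat ω) * (Xhat ω - X ω) ∂ℙ) +
      ∫ ω, fderiv ℝ (F ω) (Xhat ω, yhat, Uhat ω) (0, 0, 1) * (Uhat ω - U ω) ∂ℙ := by
  intro yhat y h1 h2 h3 h4 h5
  set L : Ω → (ℝ × (Fin k → ℝ) × ℝ →L[ℝ] ℝ) :=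
    fun ω => fderiv ℝ (F ω) (Xhat ω, yhat, Uhat ω) with hL
  set c : Fin k → ℝ := fun i => ∫ ω, deriv (γ i) (Xhat ω) * (Xhat ω - X ω) ∂ℙ with hc
  -- mean-field term estimate
  have hyc : ∀ i, yhat i - y i ≤ c i := by
    intro i
    have hpt : ∀ ω, γ i (Xhat ω) - γ i (X ω) ≤ deriv (γ i) (Xhat ω) * (Xhat ω - X ω) :=
      fun ω => conv1d_grad (hγconv i) (fun x => (hγdiff i x)) _ _
    calc yhat i - y i = ∫ ω, (γ i (Xhat ω) - γ i (X ω)) ∂ℙ :=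
          (integral_sub (hγXhat i) (hγX i)).symm
      _ ≤ c i := integral_mono ((hγXhat i).sub (hγX i)) (h4 i) hpt
  -- pointwise convexity estimate
  have hpt : ∀ ω, F ω (Xhat ω, yhat, Uhat ω) - F ω (X ω, y, U ω) ≤
      L ω (1, 0, 0) * (Xhat ω - X ω) + (∑ i, L ω (0, Pi.single i 1, 0) * c i)
        + L ω (0, 0, 1) * (Uhat ω - U ω) := by
    intro ω
    have h0 := conv_grad (hFconv ω) (hFdiff ω) (Xhat ω, yhat, Uhat ω) (X ω, y, U ω)
    have hsub : ((Xhat ω, yhat, Uhat ω) : ℝ × (Fin k → ℝ) × ℝ) - (X ω, y, U ω)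
        = (Xhat ω - X ω, yhat - y, Uhat ω - U ω) := rfl
    rw [hsub, clm_decomp] at h0
    refine h0.trans ?_
    have hmid : ∑ i, (yhat - y) i * L ω (0, Pi.single i 1, 0)
        ≤ ∑ i, L ω (0, Pi.single i 1, 0) * c i := by
      refine Finset.sum_le_sum fun i _ => ?_
      rw [mul_comm (L ω (0, Pi.single i 1, 0)) (c i)]
      exact mul_le_mul_of_nonneg_right (hyc i) (hFy ω _ i)
    have e1 : (Xhat ω - X ω) * L ω (1, 0, 0) = L ω (1, 0, 0) * (Xhat ω - X ω) := mul_comm _ _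
    have e3 : (Uhat ω - U ω) * L ω (0, 0, 1) = L ω (0, 0, 1) * (Uhat ω - U ω) := mul_comm _ _
    linarith [hmid]
  -- integrate
  have hsumInt : Integrable (fun ω => ∑ i, L ω (0, Pi.single i 1, 0) * c i) ℙ :=
    integrable_finset_sum _ fun i _ => (h3 i).mul_const (c i)
  have hG : Integrable (fun ω => L ω (1, 0, 0) * (Xhat ω - X ω)
      + (∑ i, L ω (0, Pi.single i 1, 0) * c i) + L ω (0, 0, 1) * (Uhat ω - U ω)) ℙ :=
    (h2.add hsumInt).add h5
  have hmono := integral_mono h1 hG hpt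
  refine hmono.trans_eq ?_
  have hAS : Integrable (fun ω => L ω (1, 0, 0) * (Xhat ω - X ω)
      + ∑ i, L ω (0, Pi.single i 1, 0) * c i) ℙ := h2.add hsumInt
  rw [integral_add hAS h5, integral_add h2 hsumInt,
    integral_finset_sum _ fun i _ => (h3 i).mul_const (c i)]
  congr 1
  congr 1
  exact Finset.sum_congr rfl fun i _ => integral_mul_const _ _
end

section
/- Let (Ω, ℱ, ℙ) be a probability space, n ≥ 1, ε ≥ 0, K ≥ 0, L ≥ 0. Let h : ℝ×ℝ → ℝ be K-Lipschitz with respect to the Euclidean norm on ℝ², and let φ : ℝ → ℝ be L-Lipschitz. Let X₁,…,Xₙ and Y₁,…,Yₙ be square-integrable real random variables on Ω such that Y₁,…,Yₙ are independent and identically distributed, φ(Y₁) is square-integrable, and E[|Xⱼ − Yⱼ|²] ≤ ε for every j = 1,…,n. Then |E[h(X₁, (1/n)∑_{j=1}^n φ(Xⱼ))] − E[h(Y₁, E[φ(Y₁)])]| ≤ K·√ε + K·L·√ε + K·(Var(φ(Y₁))/n)^{1/2}, where Var(φ(Y₁)) = E[(φ(Y₁) − E[φ(Y₁)])²]. -/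
open MeasureTheory ProbabilityTheory

lemma cae_integral_abs_le_sqrt {Ω : Type*} [MeasurableSpace Ω] (Pr : Measure Ω)
    [IsProbabilityMeasure Pr] {f : Ω → ℝ} (hf : MemLp f 2 Pr) :
    ∫ ω, |f ω| ∂Pr ≤ Real.sqrt (∫ ω, (f ω) ^ 2 ∂Pr) := by
  have habs : MemLp (fun ω => |f ω|) 2 Pr := by simpa using hf.norm
  have h1 := variance_nonneg (fun ω => |f ω|) Pr
  rw [variance_eq_sub habs] at h1
  have h2 : (∫ ω, |f ω| ∂Pr) ^ 2 ≤ ∫ ω, (f ω) ^ 2 ∂Pr := by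
    have : (Pr[(fun ω => |f ω|) ^ 2]) = ∫ ω, (f ω) ^ 2 ∂Pr := by
      simp [Pi.pow_apply, sq_abs]
    linarith [h1, this ▸ h1]
  calc ∫ ω, |f ω| ∂Pr = Real.sqrt ((∫ ω, |f ω| ∂Pr) ^ 2) :=
        (Real.sqrt_sq (integral_nonneg fun ω => abs_nonneg _)).symm
    _ ≤ _ := Real.sqrt_le_sqrt h2

/-- The cost-approximation estimate behind `𝒥ⁱ(u¹,…,uⁿ) = Jⁱ(uⁱ) + O(√εₙ)` in the proof
of the ε-Nash equilibrium result (Theorem 2): if `h` is `K`-Lipschitz with respect to the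
Euclidean norm on `ℝ²`, `φ` is `L`-Lipschitz, `Y₁, …, Yₙ` are i.i.d. with `φ(Y₁)` square
integrable, and `E[|Xⱼ - Yⱼ|²] ≤ ε` for each `j`, then
`|E[h(X₁, (1/n)∑ⱼ φ(Xⱼ))] - E[h(Y₁, E[φ(Y₁)])]| ≤ K√ε + KL√ε + K (Var(φ(Y₁))/n)^{1/2}`. -/
theorem cost_approximation_estimate {Ω : Type*} [MeasurableSpace Ω]
    (Pr : Measure Ω) [IsProbabilityMeasure Pr]
    (n : ℕ) (hn : 1 ≤ n) (ε K L : ℝ) (hε : 0 ≤ ε) (hK : 0 ≤ K) (hL : 0 ≤ L)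
    (h : ℝ × ℝ → ℝ)
    (hh : ∀ p q : ℝ × ℝ, |h p - h q| ≤ K * Real.sqrt ((p.1 - q.1) ^ 2 + (p.2 - q.2) ^ 2))
    (φ : ℝ → ℝ) (hφ : ∀ a b : ℝ, |φ a - φ b| ≤ L * |a - b|)
    (X Y : Fin n → Ω → ℝ)
    (hXsq : ∀ j, MemLp (X j) 2 Pr) (hYsq : ∀ j, MemLp (Y j) 2 Pr)
    (hYmeas : ∀ j, Measurable (Y j))
    (hYindep : iIndepFun Y Pr)
    (hYid : ∀ j : Fin n, Measure.map (Y j) Pr = Measure.map (Y ⟨0, hn⟩) Pr)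
    (hφYsq : MemLp (fun ω => φ (Y ⟨0, hn⟩ ω)) 2 Pr)
    (hclose : ∀ j : Fin n, (∫ ω, |X j ω - Y j ω| ^ 2 ∂Pr) ≤ ε) :
    |(∫ ω, h (X ⟨0, hn⟩ ω, (1 / (n : ℝ)) * ∑ j : Fin n, φ (X j ω)) ∂Pr) -
        ∫ ω, h (Y ⟨0, hn⟩ ω, ∫ ω', φ (Y ⟨0, hn⟩ ω') ∂Pr) ∂Pr| ≤
      K * Real.sqrt ε + K * L * Real.sqrt ε +
        K * Real.sqrt ((∫ ω, (φ (Y ⟨0, hn⟩ ω) - ∫ ω', φ (Y ⟨0, hn⟩ ω') ∂Pr) ^ 2 ∂Pr) / n) := by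
  set i0 : Fin n := ⟨0, hn⟩ with hi0
  set m : ℝ := ∫ ω', φ (Y i0 ω') ∂Pr with hm
  have hnpos : (0:ℝ) < n := by exact_mod_cast hn
  have hnne : (n:ℝ) ≠ 0 := ne_of_gt hnpos
  -- continuity facts
  have hhcont : Continuous h := by
    apply LipschitzWith.continuous (K := Real.toNNReal (2 * K))
    apply LipschitzWith.of_dist_le_mul
    intro p q
    have hd : dist p q = max |p.1 - q.1| |p.2 - q.2| := by
      rw [Prod.dist_eq, Real.dist_eq, Real.dist_eq]
    have h1 : |p.1 - q.1| ≤ dist p q := by rw [hd]; exact le_max_left _ _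
    have h2 : |p.2 - q.2| ≤ dist p q := by rw [hd]; exact le_max_right _ _
    have hs : Real.sqrt ((p.1 - q.1) ^ 2 + (p.2 - q.2) ^ 2) ≤ 2 * dist p q := by
      rw [show (2 : ℝ) * dist p q = Real.sqrt ((2 * dist p q) ^ 2) by
        rw [Real.sqrt_sq (by positivity)]]
      apply Real.sqrt_le_sqrt
      nlinarith [abs_nonneg (p.1 - q.1), abs_nonneg (p.2 - q.2), sq_abs (p.1 - q.1),
        sq_abs (p.2 - q.2), dist_nonneg (x := p) (y := q)]
    calc dist (h p) (h q) = |h p - h q| := Real.dist_eq _ _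
      _ ≤ K * Real.sqrt ((p.1 - q.1) ^ 2 + (p.2 - q.2) ^ 2) := hh p q
      _ ≤ K * (2 * dist p q) := by
          exact mul_le_mul_of_nonneg_left hs hK
      _ = (Real.toNNReal (2 * K)) * dist p q := by
          rw [Real.coe_toNNReal _ (by positivity)]; ring
  have hφlip : LipschitzWith (Real.toNNReal L) φ := by
    apply LipschitzWith.of_dist_le_mul
    intro a b
    rw [Real.dist_eq, Real.dist_eq, Real.coe_toNNReal _ hL]
    exact hφ a b
  have hφcont : Continuous φ := hφlip.continuous
  have hφmeas : Measurable φ := hφcont.measurable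
  -- composition with φ preserves MemLp 2
  have hφcomp : ∀ g : Ω → ℝ, MemLp g 2 Pr → MemLp (fun ω => φ (g ω)) 2 Pr := by
    intro g hg
    have hψ : LipschitzWith (Real.toNNReal L) (fun x => φ x - φ 0) := by
      apply LipschitzWith.of_dist_le_mul
      intro a b
      rw [Real.dist_eq, Real.dist_eq, Real.coe_toNNReal _ hL]
      simpa using hφ a b
    have := (hψ.comp_memLp (by simp) hg).add (memLp_const (φ 0))
    convert this using 1
    funext ω; simp [Function.comp]
  -- key √(a²+b²) ≤ |a|+|b|
  have hsqrt2 : ∀ a b : ℝ, Real.sqrt (a ^ 2 + b ^ 2) ≤ |a| + |b| := by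
    intro a b
    rw [show |a| + |b| = Real.sqrt ((|a| + |b|) ^ 2) by
      rw [Real.sqrt_sq (by positivity)]]
    apply Real.sqrt_le_sqrt
    nlinarith [abs_nonneg a, abs_nonneg b, sq_abs a, sq_abs b]
  -- identically distributed
  have hid : ∀ j, IdentDistrib (Y j) (Y i0) Pr Pr := fun j =>
    ⟨(hYmeas j).aemeasurable, (hYmeas i0).aemeasurable, hYid j⟩
  have hidZ : ∀ j, IdentDistrib (fun ω => φ (Y j ω)) (fun ω => φ (Y i0 ω)) Pr Pr :=
    fun j => (hid j).comp hφmeas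
  have hZ : ∀ j, MemLp (fun ω => φ (Y j ω)) 2 Pr := fun j => (hidZ j).symm.memLp_snd hφYsq
  have hφX : ∀ j, MemLp (fun ω => φ (X j ω)) 2 Pr := fun j => hφcomp _ (hXsq j)
  -- abbreviations
  set SX : Ω → ℝ := fun ω => (1 / (n : ℝ)) * ∑ j : Fin n, φ (X j ω) with hSX
  set SY : Ω → ℝ := fun ω => (1 / (n : ℝ)) * ∑ j : Fin n, φ (Y j ω) with hSY
  have hSXmem : MemLp SX 2 Pr := by
    apply MemLp.const_mul
    have := memLp_finset_sum' (μ := Pr) (p := 2) Finset.univ (fun j (_ : j ∈ Finset.univ) => hφX j)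
    convert this using 1
    funext ω; simp
  have hSYmem : MemLp SY 2 Pr := by
    apply MemLp.const_mul
    have := memLp_finset_sum' (μ := Pr) (p := 2) Finset.univ (fun j (_ : j ∈ Finset.univ) => hZ j)
    convert this using 1
    funext ω; simp
  -- the two integrands
  set F : Ω → ℝ := fun ω => h (X i0 ω, SX ω) with hF
  set G : Ω → ℝ := fun ω => h (Y i0 ω, m) with hG
  -- integrability of G
  have hGint : Integrable G Pr := by
    have hmeasG : AEStronglyMeasurable G Pr :=
      (hhcont.measurable.comp ((hYmeas i0).prodMk measurable_const)).aestronglyMeasurable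
    apply Integrable.mono' (g := fun ω => |h (0, 0)| + K * (|Y i0 ω| + |m|)) _ hmeasG
    · filter_upwards with ω
      have := hh (Y i0 ω, m) (0, 0)
      have h2 : Real.sqrt ((Y i0 ω - 0) ^ 2 + (m - 0) ^ 2) ≤ |Y i0 ω| + |m| := by
        simpa using hsqrt2 (Y i0 ω) m
      have h3 : |h (Y i0 ω, m) - h (0, 0)| ≤ K * (|Y i0 ω| + |m|) :=
        le_trans this (mul_le_mul_of_nonneg_left h2 hK)
      calc ‖G ω‖ = |h (Y i0 ω, m)| := rfl
        _ ≤ |h (0,0)| + |h (Y i0 ω, m) - h (0,0)| := by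
            have := abs_sub_abs_le_abs_sub (h (Y i0 ω, m)) (h (0,0)); linarith [abs_abs (h (0,0))]
        _ ≤ |h (0,0)| + K * (|Y i0 ω| + |m|) := by linarith
    · apply Integrable.add (integrable_const _)
      apply Integrable.const_mul
      apply Integrable.add _ (integrable_const _)
      exact ((hYsq i0).integrable one_le_two).abs
  -- pointwise bound on F - G
  have hbound : ∀ ω, |F ω - G ω| ≤ K * |X i0 ω - Y i0 ω| + K * |SX ω - m| := by
    intro ω
    have := hh (X i0 ω, SX ω) (Y i0 ω, m)
    have h2 := hsqrt2 (X i0 ω - Y i0 ω) (SX ω - m)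
    calc |F ω - G ω| ≤ K * Real.sqrt ((X i0 ω - Y i0 ω) ^ 2 + (SX ω - m) ^ 2) := this
      _ ≤ K * (|X i0 ω - Y i0 ω| + |SX ω - m|) := mul_le_mul_of_nonneg_left h2 hK
      _ = K * |X i0 ω - Y i0 ω| + K * |SX ω - m| := by ring
  -- integrability of the bound
  have hXYint : Integrable (fun ω => |X i0 ω - Y i0 ω|) Pr :=
    (((hXsq i0).sub (hYsq i0)).integrable one_le_two).abs
  have hSXmint : Integrable (fun ω => |SX ω - m|) Pr :=
    ((hSXmem.sub (memLp_const m)).integrable one_le_two).abs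
  have hBint : Integrable (fun ω => K * |X i0 ω - Y i0 ω| + K * |SX ω - m|) Pr :=
    (hXYint.const_mul K).add (hSXmint.const_mul K)
  -- AESM of F
  have hFmeas : AEStronglyMeasurable F Pr := by
    apply hhcont.comp_aestronglyMeasurable
    apply AEStronglyMeasurable.prodMk (hXsq i0).1
    exact hSXmem.1
  have hFGint : Integrable (fun ω => F ω - G ω) Pr := by
    apply Integrable.mono' hBint (hFmeas.sub hGint.1)
    filter_upwards with ω
    simpa using hbound ω
  have hFint : Integrable F Pr := by
    have := hGint.add hFGint
    apply this.congr
    filter_upwards with ω; simp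
  -- main chain, part 1
  have step1 : |(∫ ω, F ω ∂Pr) - ∫ ω, G ω ∂Pr| ≤
      K * (∫ ω, |X i0 ω - Y i0 ω| ∂Pr) + K * (∫ ω, |SX ω - m| ∂Pr) := by
    rw [← integral_sub hFint hGint]
    calc |∫ ω, (F ω - G ω) ∂Pr| ≤ ∫ ω, |F ω - G ω| ∂Pr := by
          simpa using norm_integral_le_integral_norm (μ := Pr) (f := fun ω => F ω - G ω)
      _ ≤ ∫ ω, (K * |X i0 ω - Y i0 ω| + K * |SX ω - m|) ∂Pr := by
          apply integral_mono hFGint.abs hBint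
          intro ω; exact hbound ω
      _ = K * (∫ ω, |X i0 ω - Y i0 ω| ∂Pr) + K * (∫ ω, |SX ω - m| ∂Pr) := by
          rw [integral_add (hXYint.const_mul K) (hSXmint.const_mul K),
            integral_const_mul, integral_const_mul]
  -- estimate of E|X_j - Y_j|
  have hXYj : ∀ j, (∫ ω, |X j ω - Y j ω| ∂Pr) ≤ Real.sqrt ε := by
    intro j
    calc (∫ ω, |X j ω - Y j ω| ∂Pr) ≤ Real.sqrt (∫ ω, (X j ω - Y j ω) ^ 2 ∂Pr) :=
        cae_integral_abs_le_sqrt Pr ((hXsq j).sub (hYsq j))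
      _ ≤ Real.sqrt ε := by
          apply Real.sqrt_le_sqrt
          have := hclose j
          simpa [sq_abs] using this
  -- estimate ∫ |SX - SY| ≤ L √ε
  have hSXSY : (∫ ω, |SX ω - SY ω| ∂Pr) ≤ L * Real.sqrt ε := by
    have hptw : ∀ ω, |SX ω - SY ω| ≤ (1 / (n:ℝ)) * ∑ j : Fin n, L * |X j ω - Y j ω| := by
      intro ω
      have : SX ω - SY ω = (1 / (n:ℝ)) * ∑ j : Fin n, (φ (X j ω) - φ (Y j ω)) := by
        simp [hSX, hSY, Finset.mul_sum, Finset.sum_sub_distrib, mul_sub]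
      rw [this, abs_mul, abs_of_nonneg (by positivity : (0:ℝ) ≤ 1 / (n:ℝ))]
      apply mul_le_mul_of_nonneg_left _ (by positivity : (0:ℝ) ≤ 1 / (n:ℝ))
      calc |∑ j : Fin n, (φ (X j ω) - φ (Y j ω))| ≤ ∑ j : Fin n, |φ (X j ω) - φ (Y j ω)| :=
            Finset.abs_sum_le_sum_abs _ _
        _ ≤ ∑ j : Fin n, L * |X j ω - Y j ω| := Finset.sum_le_sum fun j _ => hφ _ _
    have hrint : Integrable (fun ω => (1 / (n:ℝ)) * ∑ j : Fin n, L * |X j ω - Y j ω|) Pr := by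
      apply Integrable.const_mul
      apply integrable_finset_sum
      intro j _
      exact ((((hXsq j).sub (hYsq j)).integrable one_le_two).abs).const_mul L
    have hlint : Integrable (fun ω => |SX ω - SY ω|) Pr :=
      ((hSXmem.sub hSYmem).integrable one_le_two).abs
    calc (∫ ω, |SX ω - SY ω| ∂Pr)
        ≤ ∫ ω, (1 / (n:ℝ)) * ∑ j : Fin n, L * |X j ω - Y j ω| ∂Pr :=
          integral_mono hlint hrint hptw
      _ = (1 / (n:ℝ)) * ∑ j : Fin n, L * ∫ ω, |X j ω - Y j ω| ∂Pr := by
          rw [integral_const_mul, integral_finset_sum]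
          · congr 1; apply Finset.sum_congr rfl; intro j _; rw [integral_const_mul]
          · intro j _
            exact ((((hXsq j).sub (hYsq j)).integrable one_le_two).abs).const_mul L
      _ ≤ (1 / (n:ℝ)) * ∑ j : Fin n, L * Real.sqrt ε := by
          apply mul_le_mul_of_nonneg_left _ (by positivity)
          exact Finset.sum_le_sum fun j _ => mul_le_mul_of_nonneg_left (hXYj j) hL
      _ = L * Real.sqrt ε := by
          rw [Finset.sum_const, Finset.card_univ, Fintype.card_fin, nsmul_eq_mul]
          field_simp
  -- mean of SY is m
  have hSYmean : (∫ ω, SY ω ∂Pr) = m := by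
    rw [hSY]
    simp only
    rw [integral_const_mul, integral_finset_sum _ (fun j _ => (hZ j).integrable one_le_two)]
    have : ∀ j : Fin n, (∫ ω, φ (Y j ω) ∂Pr) = m := fun j => (hidZ j).integral_eq
    rw [Finset.sum_congr rfl fun j _ => this j]
    rw [Finset.sum_const, Finset.card_univ, Fintype.card_fin, nsmul_eq_mul]
    field_simp
  -- variance computation
  have hVar : (∫ ω, (SY ω - m) ^ 2 ∂Pr) =
      (∫ ω, (φ (Y i0 ω) - m) ^ 2 ∂Pr) / n := by
    have h1 : (∫ ω, (SY ω - m) ^ 2 ∂Pr) = variance SY Pr := by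
      rw [variance_eq_integral hSYmem.1.aemeasurable, hSYmean]
    have h2 : variance SY Pr = (1 / (n:ℝ)) ^ 2 * variance (fun ω => ∑ j : Fin n, φ (Y j ω)) Pr := by
      rw [hSY]
      exact variance_const_mul _ _ _
    have h3 : variance (fun ω => ∑ j : Fin n, φ (Y j ω)) Pr
        = ∑ j : Fin n, variance (fun ω => φ (Y j ω)) Pr := by
      have := IndepFun.variance_sum (μ := Pr) (X := fun j ω => φ (Y j ω)) (s := Finset.univ)
        (fun j _ => hZ j)
        (fun i _ j _ hij => (hYindep.indepFun hij).comp hφmeas hφmeas)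
      rw [← this]
      congr 1
      funext ω
      simp
    have h4 : ∀ j : Fin n, variance (fun ω => φ (Y j ω)) Pr = variance (fun ω => φ (Y i0 ω)) Pr :=
      fun j => (hidZ j).variance_eq
    have h5 : variance (fun ω => φ (Y i0 ω)) Pr = ∫ ω, (φ (Y i0 ω) - m) ^ 2 ∂Pr := by
      rw [variance_eq_integral hφYsq.1.aemeasurable, ← hm]
    rw [h1, h2, h3, Finset.sum_congr rfl fun j _ => h4 j, Finset.sum_const, Finset.card_univ,
      Fintype.card_fin, h5]
    field_simp
    ring
  -- estimate ∫|SY - m|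
  have hSYm : (∫ ω, |SY ω - m| ∂Pr) ≤
      Real.sqrt ((∫ ω, (φ (Y i0 ω) - m) ^ 2 ∂Pr) / n) := by
    calc (∫ ω, |SY ω - m| ∂Pr) ≤ Real.sqrt (∫ ω, (SY ω - m) ^ 2 ∂Pr) :=
        cae_integral_abs_le_sqrt Pr (hSYmem.sub (memLp_const m))
      _ = _ := by rw [hVar]
  -- combine ∫|SX - m|
  have hSXm : (∫ ω, |SX ω - m| ∂Pr) ≤
      L * Real.sqrt ε + Real.sqrt ((∫ ω, (φ (Y i0 ω) - m) ^ 2 ∂Pr) / n) := by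
    have hptw : ∀ ω, |SX ω - m| ≤ |SX ω - SY ω| + |SY ω - m| := fun ω =>
      abs_sub_le _ _ _
    have h1 : Integrable (fun ω => |SX ω - SY ω| + |SY ω - m|) Pr :=
      (((hSXmem.sub hSYmem).integrable one_le_two).abs).add
        (((hSYmem.sub (memLp_const m)).integrable one_le_two).abs)
    calc (∫ ω, |SX ω - m| ∂Pr) ≤ ∫ ω, (|SX ω - SY ω| + |SY ω - m|) ∂Pr :=
        integral_mono hSXmint h1 hptw
      _ = (∫ ω, |SX ω - SY ω| ∂Pr) + ∫ ω, |SY ω - m| ∂Pr :=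
        integral_add (((hSXmem.sub hSYmem).integrable one_le_two).abs)
          (((hSYmem.sub (memLp_const m)).integrable one_le_two).abs)
      _ ≤ _ := add_le_add hSXSY hSYm
  -- final combination
  calc |(∫ ω, F ω ∂Pr) - ∫ ω, G ω ∂Pr|
      ≤ K * (∫ ω, |X i0 ω - Y i0 ω| ∂Pr) + K * (∫ ω, |SX ω - m| ∂Pr) := step1
    _ ≤ K * Real.sqrt ε +
        K * (L * Real.sqrt ε + Real.sqrt ((∫ ω, (φ (Y i0 ω) - m) ^ 2 ∂Pr) / n)) :=
        add_le_add (mul_le_mul_of_nonneg_left (hXYj i0) hK)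
          (mul_le_mul_of_nonneg_left hSXm hK)
    _ = K * Real.sqrt ε + K * L * Real.sqrt ε +
        K * Real.sqrt ((∫ ω, (φ (Y i0 ω) - m) ^ 2 ∂Pr) / n) := by ring
end
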